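/- Let n ≥ 1, let p_1, …, p_n be the n distinct complex roots of f_n, set α_j = 1/n for j = 1,…,n, α_{n+1} = −1, p_{n+1} = 1, and for each k ∈ {1,…,n+1} let r_k > 0 be small enough that the closed disc of radius r_k about p_k contains none of the other points p_j and not 0. Then for every k ∈ {1,…,n+1}, the circle integral ∮_{|z−p_k|=r_k} z·(∑_{j=1}^{n+1} α_j/(z−p_j))² dz = 0. -/

import Mathlib

open Polynomial

noncomputable def hyperPoly (n : ℕ) : Polynomial ℂ :=
  ∑ j ∈ Finset.range (n + 1), Polynomial.C ((n.choose j : ℂ) ^ 2) * Polynomial.X ^ j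

lemma hyperPoly_eval (n : ℕ) (z : ℂ) :
    (hyperPoly n).eval z = ∑ j ∈ Finset.range (n+1), (n.choose j : ℂ)^2 * z^j := by
  simp [hyperPoly, eval_finset_sum]

lemma hyperPoly_deriv (n : ℕ) :
    derivative (hyperPoly n)
      = ∑ j ∈ Finset.range (n+1), Polynomial.C ((n.choose j : ℂ)^2 * j) * Polynomial.X ^ (j-1) := by
  rw [hyperPoly, derivative_sum]
  exact Finset.sum_congr rfl fun j _ => derivative_C_mul_X_pow _ _

lemma hyperPoly_deriv_eval (n : ℕ) (z : ℂ) :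
    z * (derivative (hyperPoly n)).eval z
      = ∑ j ∈ Finset.range (n+1), (j : ℂ) * (n.choose j : ℂ)^2 * z^j := by
  rw [hyperPoly_deriv]
  simp only [eval_finset_sum, eval_mul, eval_C, eval_pow, eval_X, Finset.mul_sum]
  refine Finset.sum_congr rfl fun j _ => ?_
  cases j with
  | zero => simp
  | succ m => simp [pow_succ]; ring

lemma hyperPoly_deriv2_eval (n : ℕ) (z : ℂ) :
    z^2 * (derivative (derivative (hyperPoly n))).eval z
      = ∑ j ∈ Finset.range (n+1), (j : ℂ) * ((j:ℂ) - 1) * (n.choose j : ℂ)^2 * z^j := by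
  rw [hyperPoly_deriv, derivative_sum]
  have : ∀ j ∈ Finset.range (n+1),
      derivative (Polynomial.C ((n.choose j : ℂ)^2 * j) * Polynomial.X ^ (j-1))
        = Polynomial.C ((n.choose j : ℂ)^2 * j * ((j-1 : ℕ):ℂ)) * Polynomial.X ^ (j-1-1) :=
    fun j _ => derivative_C_mul_X_pow _ _
  rw [Finset.sum_congr rfl this]
  simp only [eval_finset_sum, eval_mul, eval_C, eval_pow, eval_X, Finset.mul_sum]
  refine Finset.sum_congr rfl fun j _ => ?_
  match j with
  | 0 => simp
  | 1 => simp
  | (m+2) => push_cast; simp [pow_succ]; ring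

lemma ode_sum (n : ℕ) (z : ℂ) :
    ∑ j ∈ Finset.range (n+1), (j:ℂ)^2 * (n.choose j : ℂ)^2 * z^j
      = z * ∑ j ∈ Finset.range (n+1), ((n:ℂ) - j)^2 * (n.choose j : ℂ)^2 * z^j := by
  rw [Finset.sum_range_succ' (fun j => (j:ℂ)^2 * (n.choose j : ℂ)^2 * z^j) n,
      Finset.mul_sum, Finset.sum_range_succ]
  have h0 : ((0:ℕ):ℂ)^2 * (n.choose 0 : ℂ)^2 * z^0 = 0 := by norm_num
  have hn : z * (((n:ℂ) - n)^2 * (n.choose n : ℂ)^2 * z^n) = 0 := by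
    rw [sub_self]; ring
  rw [h0, hn, add_zero, add_zero]
  refine Finset.sum_congr rfl fun k hk => ?_
  have hk' : k ≤ n := (Finset.mem_range.mp hk).le
  have hkey : ((k:ℂ) + 1) * (n.choose (k+1) : ℂ) = ((n:ℂ) - k) * (n.choose k : ℂ) := by
    have := congrArg (Nat.cast : ℕ → ℂ) (Nat.choose_succ_right_eq n k)
    push_cast [Nat.cast_sub hk'] at this
    linear_combination this
  push_cast
  linear_combination (((k:ℂ)+1) * (n.choose (k+1) : ℂ) + ((n:ℂ) - k) * (n.choose k : ℂ)) * z^(k+1) * hkey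

lemma refl_sum (n : ℕ) :
    2 * ∑ j ∈ Finset.range (n+1), (j:ℂ) * (n.choose j : ℂ)^2
      = n * ∑ j ∈ Finset.range (n+1), (n.choose j : ℂ)^2 := by
  have hrefl := Finset.sum_range_reflect (fun j => (j:ℂ) * (n.choose j : ℂ)^2) (n+1)
  simp only [Nat.add_sub_cancel] at hrefl
  have h2 : ∑ j ∈ Finset.range (n+1), ((n - j : ℕ):ℂ) * (n.choose (n - j) : ℂ)^2
      = ∑ j ∈ Finset.range (n+1), ((n:ℂ) - j) * (n.choose j : ℂ)^2 := by
    refine Finset.sum_congr rfl fun j hj => ?_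
    have hj' : j ≤ n := Nat.lt_succ_iff.mp (Finset.mem_range.mp hj)
    rw [Nat.choose_symm hj', Nat.cast_sub hj']
  rw [two_mul]
  nth_rewrite 1 [← hrefl]
  rw [h2, ← Finset.sum_add_distrib, Finset.mul_sum]
  exact Finset.sum_congr rfl fun j _ => by ring

lemma derivative_prod_finset {ι : Type*} [DecidableEq ι] (t : Finset ι) (f : ι → Polynomial ℂ) :
    derivative (∏ j ∈ t, f j) = ∑ i ∈ t, (∏ j ∈ t.erase i, f j) * derivative (f i) := by
  induction t using Finset.induction_on with
  | empty => simp
  | @insert a t' ha ih =>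
    rw [Finset.prod_insert ha, derivative_mul, ih, Finset.sum_insert ha,
        Finset.erase_insert ha, Finset.mul_sum]
    congr 1
    · exact mul_comm _ _
    · refine Finset.sum_congr rfl fun i hi => ?_
      have hai : a ≠ i := fun h => ha (h ▸ hi)
      rw [Finset.erase_insert_of_ne hai, Finset.prod_insert
        (fun h => ha (Finset.mem_of_mem_erase h)), mul_assoc]


lemma root_rel (n : ℕ) {z : ℂ} (hz : (hyperPoly n).eval z = 0) :
    (z - 1) * (z * (derivative (hyperPoly n)).eval z
        + z^2 * (derivative (derivative (hyperPoly n))).eval z)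
      = 2 * n * z * (z * (derivative (hyperPoly n)).eval z) := by
  have e0 : ∑ j ∈ Finset.range (n+1), (n.choose j : ℂ)^2 * z^j = 0 := by
    rw [← hyperPoly_eval]; exact hz
  have e1 := hyperPoly_deriv_eval n z
  have e2 := hyperPoly_deriv2_eval n z
  have ode := ode_sum n z
  have hQ : ∑ j ∈ Finset.range (n+1), (j:ℂ)^2 * (n.choose j:ℂ)^2 * z^j
      = (∑ j ∈ Finset.range (n+1), (j:ℂ) * (n.choose j:ℂ)^2 * z^j)
        + ∑ j ∈ Finset.range (n+1), (j:ℂ)*((j:ℂ)-1) * (n.choose j:ℂ)^2 * z^j := by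
    rw [← Finset.sum_add_distrib]; exact Finset.sum_congr rfl fun j _ => by ring
  have hR : ∑ j ∈ Finset.range (n+1), ((n:ℂ)-(j:ℂ))^2 * (n.choose j:ℂ)^2 * z^j
      = ∑ j ∈ Finset.range (n+1), ((n:ℂ)^2 * ((n.choose j:ℂ)^2 * z^j)
          - 2*(n:ℂ)*((j:ℂ) * (n.choose j:ℂ)^2 * z^j) + (j:ℂ)^2 * (n.choose j:ℂ)^2 * z^j) :=
    Finset.sum_congr rfl fun j _ => by ring
  rw [Finset.sum_add_distrib, Finset.sum_sub_distrib, ← Finset.mul_sum, ← Finset.mul_sum] at hR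
  rw [hR] at ode
  rw [e1, e2]
  linear_combination (1-z)*hQ - ode - (n:ℂ)^2*z*e0

lemma residue_zero (n : ℕ) (hn : 1 ≤ n)
    (p : Fin (n + 1) → ℂ) (α : Fin (n + 1) → ℂ)
    (hp : Function.Injective p)
    (hroots : hyperPoly n
      = ∏ j ∈ Finset.univ.erase (Fin.last n), (Polynomial.X - Polynomial.C (p j)))
    (hplast : p (Fin.last n) = 1)
    (hα : ∀ j : Fin (n + 1), j ≠ Fin.last n → α j = 1 / (n : ℂ))
    (hαlast : α (Fin.last n) = -1)
    (k : Fin (n + 1)) (hk0 : p k ≠ 0) :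
    α k + 2 * p k * (∑ j ∈ Finset.univ.erase k, α j / (p k - p j)) = 0 := by
  classical
  set s : Finset (Fin (n+1)) := Finset.univ.erase (Fin.last n) with hs
  have hn0 : (n : ℂ) ≠ 0 := Nat.cast_ne_zero.mpr (by omega)
  by_cases hkl : k = Fin.last n
  · -- case k = last
    subst hkl
    -- the roots are ≠ 1
    have hne1 : ∀ j ∈ s, (1:ℂ) - p j ≠ 0 := by
      intro j hj
      have hjne : j ≠ Fin.last n := Finset.ne_of_mem_erase hj
      have : p j ≠ 1 := fun h => hjne (hp (h.trans hplast.symm))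
      exact sub_ne_zero.2 (Ne.symm this)
    set E : ℂ := ∏ j ∈ s, (1 - p j) with hE
    have hEne : E ≠ 0 := Finset.prod_ne_zero_iff.mpr hne1
    set T : ℂ := ∑ i ∈ s, (1 - p i)⁻¹ with hT
    have hevE : (hyperPoly n).eval 1 = E := by
      rw [hroots]; simp [eval_prod, hE]
    have hevD : (derivative (hyperPoly n)).eval 1 = E * T := by
      rw [hroots, _root_.derivative_prod_finset]
      simp only [derivative_sub, derivative_X, derivative_C, sub_zero, mul_one,
        eval_finset_sum, eval_prod, eval_sub, eval_X, eval_C]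
      rw [hT, Finset.mul_sum]
      refine Finset.sum_congr rfl fun i hi => ?_
      have hthis := Finset.prod_erase_mul s (fun j => 1 - p j) hi
      have hnei := hne1 i hi
      field_simp [hnei]
      linear_combination hthis
    -- the combinatorial identity
    have hcomb : 2 * (derivative (hyperPoly n)).eval 1 = n * (hyperPoly n).eval 1 := by
      have h1 := hyperPoly_deriv_eval n 1
      have h0 := hyperPoly_eval n 1
      simp only [one_pow, mul_one, one_mul] at h1 h0
      rw [h1, h0, refl_sum]
    rw [hevE, hevD] at hcomb
    have hTn : 2 * T = n := by
      refine mul_right_cancel₀ hEne ?_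
      linear_combination hcomb
    -- now finish
    have hsum : ∑ j ∈ Finset.univ.erase (Fin.last n), α j / (p (Fin.last n) - p j)
        = (1/(n:ℂ)) * T := by
      rw [hT, Finset.mul_sum]
      refine Finset.sum_congr rfl fun j hj => ?_
      rw [hα j (Finset.ne_of_mem_erase hj), hplast, div_eq_mul_inv]
    rw [hsum, hαlast, hplast]
    field_simp
    linear_combination hTn
  · -- case k ≠ last
    have hks : k ∈ s := Finset.mem_erase.mpr ⟨hkl, Finset.mem_univ k⟩
    set z : ℂ := p k with hzdef
    have hz1 : z - 1 ≠ 0 := by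
      rw [← hplast]; exact sub_ne_zero.2 fun h => hkl (hp h)
    have hzj : ∀ j, j ≠ k → z - p j ≠ 0 := fun j hj =>
      sub_ne_zero.2 fun h => hj (hp h.symm)
    have hevalz : (hyperPoly n).eval z = 0 := by
      rw [hroots, eval_prod]
      refine Finset.prod_eq_zero hks ?_
      simp [hzdef]
    set D : ℂ := ∏ j ∈ s.erase k, (z - p j) with hD
    have hDne : D ≠ 0 :=
      Finset.prod_ne_zero_iff.mpr fun j hj => hzj j (Finset.ne_of_mem_erase hj)
    set U : ℂ := ∑ l ∈ s.erase k, (z - p l)⁻¹ with hU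
    have hderiv1 : derivative (hyperPoly n) = ∑ i ∈ s, ∏ j ∈ s.erase i, (X - C (p j)) := by
      rw [hroots, _root_.derivative_prod_finset]
      simp
    have hd1 : (derivative (hyperPoly n)).eval z = D := by
      rw [hderiv1]
      simp only [eval_finset_sum, eval_prod, eval_sub, eval_X, eval_C]
      have h1 : ∀ b ∈ s, b ≠ k → ∏ x ∈ s.erase b, (z - p x) = 0 := fun i hi hik =>
        Finset.prod_eq_zero (Finset.mem_erase.mpr ⟨Ne.symm hik, hks⟩) (sub_eq_zero.mpr hzdef)
      rw [Finset.sum_eq_single k h1 (fun h => absurd hks h)]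
    have hd2 : (derivative (derivative (hyperPoly n))).eval z
        = 2 * ∑ l ∈ s.erase k, ∏ j ∈ (s.erase k).erase l, (z - p j) := by
      rw [hderiv1, derivative_sum]
      have hder : ∀ i ∈ s, derivative (∏ j ∈ s.erase i, (X - C (p j)))
          = ∑ l ∈ s.erase i, ∏ j ∈ (s.erase i).erase l, (X - C (p j)) := by
        intro i _
        rw [_root_.derivative_prod_finset]; simp
      rw [Finset.sum_congr rfl hder]
      simp only [eval_finset_sum, eval_prod, eval_sub, eval_X, eval_C]
      rw [← Finset.add_sum_erase _ _ hks]
      have houter : ∀ i ∈ s.erase k,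
          (∑ l ∈ s.erase i, ∏ j ∈ (s.erase i).erase l, (z - p j))
            = ∏ j ∈ (s.erase k).erase i, (z - p j) := by
        intro i hi
        have hik : i ≠ k := Finset.ne_of_mem_erase hi
        have hksi : k ∈ s.erase i := Finset.mem_erase.mpr ⟨Ne.symm hik, hks⟩
        have h1 : ∀ l ∈ s.erase i, l ≠ k → ∏ j ∈ ((s.erase i)).erase l, (z - p j) = 0 :=
          fun l hl hlk => Finset.prod_eq_zero
            (Finset.mem_erase.mpr ⟨Ne.symm hlk, hksi⟩) (sub_eq_zero.mpr hzdef)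
        rw [Finset.sum_eq_single k h1 (fun h => absurd hksi h), Finset.erase_right_comm]
      rw [Finset.sum_congr rfl houter, two_mul]
    have hDU : ∑ l ∈ s.erase k, ∏ j ∈ (s.erase k).erase l, (z - p j) = D * U := by
      rw [hU, Finset.mul_sum]
      refine Finset.sum_congr rfl fun l hl => ?_
      have hnel : z - p l ≠ 0 := hzj l (Finset.ne_of_mem_erase hl)
      have hthis := Finset.prod_erase_mul (s.erase k) (fun j => z - p j) hl
      field_simp [hnel]
      linear_combination hthis
    have hkey : (z - 1) * (1 + 2 * z * U) = 2 * n * z := by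
      have h := root_rel n hevalz
      rw [hd1, hd2, hDU] at h
      refine mul_left_cancel₀ (mul_ne_zero hk0 hDne) ?_
      linear_combination h
    have hlastmem : Fin.last n ∈ Finset.univ.erase k :=
      Finset.mem_erase.mpr ⟨fun h => hkl h.symm, Finset.mem_univ _⟩
    have hsplit : ∑ j ∈ Finset.univ.erase k, α j / (z - p j)
        = -1 / (z - 1) + (1/(n:ℂ)) * U := by
      rw [← Finset.add_sum_erase _ _ hlastmem, hαlast, hplast, Finset.erase_right_comm]
      congr 1
      rw [hU, Finset.mul_sum]
      refine Finset.sum_congr rfl fun j hj => ?_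
      have hjl : j ≠ Fin.last n :=
        Finset.ne_of_mem_erase (Finset.mem_of_mem_erase hj)
      rw [hα j hjl, div_eq_mul_inv]
    rw [hα k hkl, hsplit]
    field_simp
    linear_combination hkey

lemma circleIntegral_add' {f g : ℂ → ℂ} {c : ℂ} {R : ℝ} (hf : CircleIntegrable f c R)
    (hg : CircleIntegrable g c R) :
    (∮ z in C(c, R), (f z + g z)) = (∮ z in C(c, R), f z) + ∮ z in C(c, R), g z := by
  simp only [circleIntegral, smul_add, intervalIntegral.integral_add hf.out hg.out]

theorem stmt_16 (n : ℕ) (hn : 1 ≤ n)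
    (p : Fin (n + 1) → ℂ) (α : Fin (n + 1) → ℂ)
    (hp : Function.Injective p)
    (hroots : hyperPoly n
      = ∏ j ∈ Finset.univ.erase (Fin.last n), (Polynomial.X - Polynomial.C (p j)))
    (hplast : p (Fin.last n) = 1)
    (hα : ∀ j : Fin (n + 1), j ≠ Fin.last n → α j = 1 / (n : ℂ))
    (hαlast : α (Fin.last n) = -1)
    (r : Fin (n + 1) → ℝ) (hr : ∀ k, 0 < r k)
    (hdisc : ∀ k j, j ≠ k → p j ∉ Metric.closedBall (p k) (r k))
    (h0disc : ∀ k, (0 : ℂ) ∉ Metric.closedBall (p k) (r k))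
    (k : Fin (n + 1)) :
    (∮ z in C(p k, r k), z * (∑ j, α j / (z - p j)) ^ 2) = 0 := by
  classical
  have hR : 0 < r k := hr k
  have hk0 : p k ≠ 0 := fun h => h0disc k (h ▸ Metric.mem_closedBall_self hR.le)
  set h : ℂ → ℂ := fun z => ∑ j ∈ Finset.univ.erase k, α j / (z - p j) with hh
  have hmem_ne : ∀ z ∈ Metric.closedBall (p k) (r k), ∀ j, j ≠ k → z - p j ≠ 0 := by
    intro z hz j hj
    exact sub_ne_zero.2 fun he => hdisc k j hj (he ▸ hz)
  have hdiffAt : ∀ z ∈ Metric.closedBall (p k) (r k), DifferentiableAt ℂ h z := by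
    intro z hz
    refine DifferentiableAt.fun_sum fun j hj => ?_
    exact (differentiableAt_const _).div (differentiableAt_id.sub (differentiableAt_const _))
      (hmem_ne z hz j (Finset.ne_of_mem_erase hj))
  have hconth : ContinuousOn h (Metric.closedBall (p k) (r k)) :=
    fun z hz => (hdiffAt z hz).continuousAt.continuousWithinAt
  have hsph : Metric.sphere (p k) (r k) ⊆ Metric.closedBall (p k) (r k) :=
    Metric.sphere_subset_closedBall
  have hzc : ∀ z ∈ Metric.sphere (p k) (r k), z - p k ≠ 0 := by
    intro z hz
    refine sub_ne_zero.2 fun he => ?_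
    rw [Metric.mem_sphere, he, dist_self] at hz
    exact hR.ne hz
  -- the three pieces
  set A : ℂ → ℂ := fun z => (z - p k)⁻¹ * (α k^2 + 2*α k*z*h z) with hA
  set B : ℂ → ℂ := fun z => (α k^2 * p k) * ((z - p k)^(-2:ℤ)) with hB
  set Cf : ℂ → ℂ := fun z => z * (h z)^2 with hCf
  have alg : ∀ (a cc w u : ℂ), u ≠ 0 →
      (u + cc) * (a / u + w)^2
        = u⁻¹ * (a^2 + 2*a*(u+cc)*w) + (a^2*cc) * (u^(-2:ℤ)) + (u+cc)*w^2 := by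
    intro a cc w u hu
    have h2 : u^(-2:ℤ) = (u^2)⁻¹ := by
      rw [zpow_neg]
      norm_cast
    rw [h2]
    field_simp
    ring
  have hdecomp : Set.EqOn (fun z => z * (∑ j, α j / (z - p j)) ^ 2)
      (fun z => A z + B z + Cf z) (Metric.sphere (p k) (r k)) := by
    intro z hz
    have hu : z - p k ≠ 0 := hzc z hz
    have hsum : (∑ j, α j / (z - p j)) = α k / (z - p k) + h z :=
      (Finset.add_sum_erase Finset.univ (fun j => α j / (z - p j)) (Finset.mem_univ k)).symm
    simp only [hA, hB, hCf]
    rw [hsum]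
    have halg := alg (α k) (p k) (h z) (z - p k) hu
    rw [sub_add_cancel] at halg
    exact halg
  rw [circleIntegral.integral_congr hR.le hdecomp]
  -- integrability
  have hCB : CircleIntegrable B (p k) (r k) := by
    refine ContinuousOn.circleIntegrable hR.le ?_
    exact continuousOn_const.mul (((continuousOn_id.sub continuousOn_const).zpow₀ (-2:ℤ)
      (fun z hz => Or.inl (hzc z hz))))
  have hCA : CircleIntegrable A (p k) (r k) := by
    refine ContinuousOn.circleIntegrable hR.le ?_
    exact ((continuousOn_id.sub continuousOn_const).inv₀ hzc).mul
      (continuousOn_const.add ((continuousOn_const.mul continuousOn_id).mul (hconth.mono hsph)))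
  have hCC : CircleIntegrable Cf (p k) (r k) := by
    refine ContinuousOn.circleIntegrable hR.le ?_
    exact continuousOn_id.mul ((hconth.mono hsph).pow 2)
  have e1 : circleIntegral (fun z => A z + B z + Cf z) (p k) (r k)
      = circleIntegral (fun z => A z + B z) (p k) (r k)
        + circleIntegral Cf (p k) (r k) :=
    circleIntegral_add' (hCA.add hCB) hCC
  have e2 : circleIntegral (fun z => A z + B z) (p k) (r k)
      = circleIntegral A (p k) (r k) + circleIntegral B (p k) (r k) :=
    circleIntegral_add' hCA hCB
  rw [e1, e2]
  -- compute each
  have hIB : (∮ z in C(p k, r k), B z) = 0 := by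
    simp only [hB]
    rw [circleIntegral.integral_const_mul,
      circleIntegral.integral_sub_zpow_of_ne (by decide) (p k) (p k) (r k), mul_zero]
  have hIC : (∮ z in C(p k, r k), Cf z) = 0 := by
    refine Complex.circleIntegral_eq_zero_of_differentiable_on_off_countable hR.le
      Set.countable_empty (continuousOn_id.mul (hconth.pow 2)) ?_
    intro z hz
    exact differentiableAt_id.mul
      ((hdiffAt z (Metric.ball_subset_closedBall hz.1)).pow 2)
  have hFdiff : DiffContOnCl ℂ (fun z => α k^2 + 2*α k*z*h z) (Metric.ball (p k) (r k)) := by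
    apply DifferentiableOn.diffContOnCl
    rw [closure_ball (p k) hR.ne']
    intro z hz
    exact ((differentiableAt_const _).add
      (((differentiableAt_const _).mul differentiableAt_id).mul (hdiffAt z hz))).differentiableWithinAt
  have hIA : (∮ z in C(p k, r k), A z)
      = (2*Real.pi*Complex.I) * (α k^2 + 2*α k*(p k)*h (p k)) := by
    have := hFdiff.circleIntegral_sub_inv_smul (Metric.mem_ball_self hR)
    simpa [hA, smul_eq_mul] using this
  rw [hIA, hIB, hIC, add_zero, add_zero]
  have hres := residue_zero n hn p α hp hroots hplast hα hαlast k hk0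
  have hhpk : h (p k) = ∑ j ∈ Finset.univ.erase k, α j / (p k - p j) := rfl
  rw [hhpk]
  linear_combination (2*(Real.pi:ℂ)*Complex.I*(α k)) * hres
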